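/- For positive integers a, b and positive integer t, ∑_{i=0}^{t} ((t-i+1)·F(a,b,-i,t) + (t-i+1)·F(b-1,a+1,-i,t)) = (t+2)·F(a+1,b,0,t), where F is the bounded-coordinate solution count. -/

import Mathlib

def G (n : ℕ) (s : ℤ) (t : ℕ) : ℕ :=
  (Finset.univ.filter
    (fun x : Fin n → Fin (t + 1) => ∑ i, (x i : ℤ) = s)).card

lemma rev_cast (t : ℕ) (k : Fin (t + 1)) : ((k.rev : Fin (t+1)) : ℤ) = t - (k : ℤ) := by
  have h := Fin.val_rev k
  have hk : (k : ℕ) ≤ t := Nat.lt_succ_iff.mp k.isLt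
  omega

lemma G_rev (n t : ℕ) (s : ℤ) : G n s t = G n (n * t - s) t := by
  unfold G
  refine Finset.card_nbij' (fun x => fun i => (x i).rev) (fun x => fun i => (x i).rev)
    ?_ ?_ ?_ ?_
  · intro x hx
    simp only [Finset.mem_coe, Finset.mem_filter, Finset.mem_univ, true_and] at hx ⊢
    simp only [rev_cast, Finset.sum_sub_distrib, Finset.sum_const, Finset.card_univ,
      Fintype.card_fin, nsmul_eq_mul, hx]
  · intro x hx
    simp only [Finset.mem_coe, Finset.mem_filter, Finset.mem_univ, true_and] at hx ⊢
    simp only [rev_cast, Finset.sum_sub_distrib, Finset.sum_const, Finset.card_univ,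
      Fintype.card_fin, nsmul_eq_mul, hx]
    ring
  · intro x _; funext i; simp
  · intro x _; funext i; simp

lemma G_succ (n t : ℕ) (s : ℤ) :
    G (n + 1) s t = ∑ i ∈ Finset.range (t + 1), G n (s - i) t := by
  rw [← Fin.sum_univ_eq_sum_range (fun i => G n (s - i) t) (t+1)]
  unfold G
  rw [Finset.card_eq_sum_card_fiberwise (f := fun x => x 0) (t := Finset.univ)
    (fun x _ => Finset.mem_univ _)]
  refine Finset.sum_congr rfl fun v _ => ?_
  refine Finset.card_nbij' (fun x => Fin.tail x) (fun y => Fin.cons v y) ?_ ?_ ?_ ?_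
  · intro x hx
    simp only [Finset.mem_coe, Finset.mem_filter, Finset.mem_univ, true_and] at hx ⊢
    obtain ⟨hs, h0⟩ := hx
    rw [Fin.sum_univ_succ] at hs
    simp [Fin.tail, ← hs, h0]
  · intro y hy
    simp only [Finset.mem_coe, Finset.mem_filter, Finset.mem_univ, true_and] at hy ⊢
    refine ⟨?_, by simp⟩
    rw [Fin.sum_univ_succ]
    simp only [Fin.cons_zero, Fin.cons_succ, hy]
    ring
  · intro x hx
    simp only [Finset.mem_coe, Finset.mem_filter, Finset.mem_univ, true_and] at hx
    rw [← hx.2]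
    exact Fin.cons_self_tail x
  · intro y _
    exact Fin.tail_cons (α := fun _ => Fin (t+1)) v y
def F (a b : ℕ) (c : ℤ) (t : ℕ) : ℕ :=
  (Finset.univ.filter
    (fun x : Fin (a + b) → Fin (t + 1) => ∑ i, (x i : ℤ) = b * t + c)).card

lemma F_eq_G (a b : ℕ) (c : ℤ) (t : ℕ) : F a b c t = G (a + b) (b * t + c) t := rfl

theorem stmt9 (a b t : ℕ) (ha : 1 ≤ a) (hb : 1 ≤ b) (ht : 1 ≤ t) :
    ∑ i ∈ Finset.range (t + 1),
        ((t - i + 1) * F a b (-(i : ℤ)) t + (t - i + 1) * F (b - 1) (a + 1) (-(i : ℤ)) t)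
      = (t + 2) * F (a + 1) b 0 t := by
  set n := a + b with hn
  have h1 : ∀ i : ℕ, i ≤ t → F a b (-(i : ℤ)) t = G n ((b : ℤ) * t - i) t := by
    intro i hi
    rw [F_eq_G]; ring_nf
    rfl
  have h2 : ∀ i : ℕ, i ≤ t → F (b - 1) (a + 1) (-(i : ℤ)) t = G n ((b : ℤ) * t - (t - i : ℕ)) t := by
    intro i hi
    rw [F_eq_G]
    have he : b - 1 + (a + 1) = n := by omega
    rw [he, G_rev]
    congr 1
    have hb1 : ((b - 1 : ℕ) : ℤ) = (b : ℤ) - 1 := by omega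
    have hti : ((t - i : ℕ) : ℤ) = (t : ℤ) - i := by omega
    push_cast [hn]
    ring_nf
    omega
  calc ∑ i ∈ Finset.range (t + 1),
        ((t - i + 1) * F a b (-(i : ℤ)) t + (t - i + 1) * F (b - 1) (a + 1) (-(i : ℤ)) t)
      = ∑ i ∈ Finset.range (t + 1), (t - i + 1) * G n ((b : ℤ) * t - i) t
        + ∑ i ∈ Finset.range (t + 1), (t - i + 1) * G n ((b : ℤ) * t - (t - i : ℕ)) t := by
        rw [← Finset.sum_add_distrib]
        refine Finset.sum_congr rfl fun i hi => ?_
        have hi' : i ≤ t := by simpa [Nat.lt_succ_iff] using hi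
        rw [h1 i hi', h2 i hi']
    _ = ∑ i ∈ Finset.range (t + 1), (t - i + 1) * G n ((b : ℤ) * t - i) t
        + ∑ i ∈ Finset.range (t + 1), (i + 1) * G n ((b : ℤ) * t - i) t := by
        congr 1
        have := Finset.sum_range_reflect (fun j => (j + 1) * G n ((b : ℤ) * t - j) t) (t + 1)
        rw [← this]
        refine Finset.sum_congr rfl fun i hi => ?_
        have hi' : i ≤ t := by simpa [Nat.lt_succ_iff] using hi
        have : t + 1 - 1 - i = t - i := by omega
        rw [this]
    _ = ∑ i ∈ Finset.range (t + 1), (t + 2) * G n ((b : ℤ) * t - i) t := by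
        rw [← Finset.sum_add_distrib]
        refine Finset.sum_congr rfl fun i hi => ?_
        have hi' : i ≤ t := by simpa [Nat.lt_succ_iff] using hi
        rw [← Nat.add_mul]
        congr 1
        omega
    _ = (t + 2) * F (a + 1) b 0 t := by
        rw [← Finset.mul_sum, F_eq_G]
        have he : a + 1 + b = n + 1 := by omega
        rw [he, G_succ]
        congr 1
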